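/- Let I be the radical ideal of a finite set X of reduced points in P^2 with reg(I^m) = m·α(I) for all m ≥ 1. Then I is minimally generated by α(I)+1 forms of degree α(I). -/

import Mathlib

open MvPolynomial

section SymbolicPower
variable {R : Type*} [CommRing R]

/-- The multiplicative set `U = R \ ⋃ P ∈ Ass(R/I), P`. -/
def assComplement (I : Ideal R) : Submonoid R where
  carrier := {x | ∀ P ∈ associatedPrimes R (R ⧸ I), x ∉ P}
  one_mem' := fun P hP => (Ideal.ne_top_iff_one P).mp hP.1.ne_top
  mul_mem' := by
    intro a b ha hb P hP hab
    rcases hP.1.mem_or_mem hab with h | h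
    · exact ha P hP h
    · exact hb P hP h

/-- The `m`-th symbolic power `I^(m) = R ∩ I^m R_U`. -/
def symbolicPower (I : Ideal R) (m : ℕ) : Ideal R :=
  Ideal.comap (algebraMap R (Localization (assComplement I)))
    (Ideal.map (algebraMap R (Localization (assComplement I))) (I ^ m))

/-- The resurgence `ρ(I) = sup { m/r : I^(m) ⊄ I^r }`. -/
noncomputable def resurgence (I : Ideal R) : ℝ :=
  sSup {x : ℝ | ∃ m r : ℕ, 0 < m ∧ 0 < r ∧ ¬ symbolicPower I m ≤ I ^ r ∧ x = (m : ℝ) / r}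

end SymbolicPower

section Poly
variable {K : Type*} [Field K] {n : ℕ}

attribute [local instance] MvPolynomial.gradedAlgebra

/-- The initial degree `α(I)`: the least degree of a nonzero element of `I`. -/
noncomputable def initDeg (I : Ideal (MvPolynomial (Fin n) K)) : ℕ :=
  sInf {t | ∃ f ∈ I, f ≠ 0 ∧ MvPolynomial.totalDegree f = t}

/-- The Waldschmidt constant `α̂(I) = inf_{m ≥ 1} α(I^(m))/m`. -/
noncomputable def waldschmidt (I : Ideal (MvPolynomial (Fin n) K)) : ℝ :=
  ⨅ m : ℕ+, (initDeg (symbolicPower I m) : ℝ) / (m : ℝ)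

/-- The vanishing (saturated radical) ideal of the projective point with homogeneous
coordinates `p`: all polynomials vanishing on the line spanned by `p`. -/
noncomputable def pointIdeal (p : Fin n → K) : Ideal (MvPolynomial (Fin n) K) :=
  ⨅ t : K, RingHom.ker (MvPolynomial.eval (t • p) : MvPolynomial (Fin n) K →+* K)

/-- An ideal is homogeneous w.r.t. the standard grading. -/
def IsHomogeneousIdeal (I : Ideal (MvPolynomial (Fin n) K)) : Prop :=
  Ideal.IsHomogeneous (homogeneousSubmodule (Fin n) K) I

/-- Two coordinate vectors represent the same projective point. -/
def ProjEq (u v : Fin n → K) : Prop := ∃ c : K, c ≠ 0 ∧ u = c • v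

/-- A homogeneous ideal is saturated (w.r.t. the irrelevant maximal ideal). -/
def IsSaturatedIdeal (J : Ideal (MvPolynomial (Fin n) K)) : Prop :=
  ∀ f, (∀ i, MvPolynomial.X i * f ∈ J) → f ∈ J

/-- The Hilbert function `t ↦ dim_K (R/J)_t` of a homogeneous ideal `J`. -/
noncomputable def hilbFun (J : Ideal (MvPolynomial (Fin n) K)) (t : ℕ) : ℕ :=
  Module.finrank K ((homogeneousSubmodule (Fin n) K t).map
    (Ideal.Quotient.mkₐ K J).toLinearMap)

/-- `I` is minimally generated by `k` forms of degree `δ`. -/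
def MinimallyGeneratedBy (I : Ideal (MvPolynomial (Fin n) K)) (k δ : ℕ) : Prop :=
  ∃ g : Fin k → MvPolynomial (Fin n) K,
    (∀ i, (g i).IsHomogeneous δ ∧ g i ≠ 0) ∧
    Ideal.span (Set.range g) = I ∧
    ∀ i, g i ∉ Ideal.span (g '' {j | j ≠ i})

/-- `IsMinFreeRes I e0 e1 e2 g A B` : the data of a graded minimal free resolution
`0 → ⊕_k R(-e2 k) -B→ ⊕_j R(-e1 j) -A→ ⊕_i R(-e0 i) → I → 0` of `I`. -/
def IsMinFreeRes (I : Ideal (MvPolynomial (Fin n) K)) {n0 n1 n2 : ℕ}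
    (e0 : Fin n0 → ℕ) (e1 : Fin n1 → ℕ) (e2 : Fin n2 → ℕ)
    (g : Fin n0 → MvPolynomial (Fin n) K)
    (A : Matrix (Fin n0) (Fin n1) (MvPolynomial (Fin n) K))
    (B : Matrix (Fin n1) (Fin n2) (MvPolynomial (Fin n) K)) : Prop :=
  (∀ i, (g i).IsHomogeneous (e0 i) ∧ g i ≠ 0) ∧
  Ideal.span (Set.range g) = I ∧
  (∀ i j, (A i j).IsHomogeneous (e1 j - e0 i) ∧ (e1 j ≤ e0 i → A i j = 0)) ∧
  (∀ j k, (B j k).IsHomogeneous (e2 k - e1 j) ∧ (e2 k ≤ e1 j → B j k = 0)) ∧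
  Function.Injective (Matrix.toLin' B) ∧
  LinearMap.range (Matrix.toLin' B) = LinearMap.ker (Matrix.toLin' A) ∧
  LinearMap.range (Matrix.toLin' A) =
    LinearMap.ker (Fintype.linearCombination (MvPolynomial (Fin n) K)
      g)

/-- The Castelnuovo–Mumford regularity of `I` is `r`: the minimal graded free
resolution of `I` satisfies `max_j (f_j - j) = r`. -/
def HasReg (I : Ideal (MvPolynomial (Fin n) K)) (r : ℕ) : Prop :=
  ∃ (n0 n1 n2 : ℕ) (e0 : Fin n0 → ℕ) (e1 : Fin n1 → ℕ) (e2 : Fin n2 → ℕ)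
    (g : Fin n0 → MvPolynomial (Fin n) K)
    (A : Matrix (Fin n0) (Fin n1) (MvPolynomial (Fin n) K))
    (B : Matrix (Fin n1) (Fin n2) (MvPolynomial (Fin n) K)),
    IsMinFreeRes I e0 e1 e2 g A B ∧
    r = max (Finset.univ.sup e0)
        (max (Finset.univ.sup fun j => e1 j - 1) (Finset.univ.sup fun k => e2 k - 2))

/-- `I` has the (minimal, linear) free resolution
`0 → R^d(-d-1) → R^{d+1}(-d) → I → 0`. -/
def HasLinearPointsRes (I : Ideal (MvPolynomial (Fin n) K)) (d : ℕ) : Prop :=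
  ∃ (g : Fin (d+1) → MvPolynomial (Fin n) K)
    (A : Matrix (Fin (d+1)) (Fin d) (MvPolynomial (Fin n) K)),
    (∀ i, (g i).IsHomogeneous d ∧ g i ≠ 0) ∧
    Ideal.span (Set.range g) = I ∧
    (∀ i j, (A i j).IsHomogeneous 1) ∧
    Function.Injective (Matrix.toLin' A) ∧
    LinearMap.range (Matrix.toLin' A) =
      LinearMap.ker (Fintype.linearCombination (MvPolynomial (Fin n) K)
        g)

/-- `I` has a minimal free resolution that is linear, with generators in degree `δ`. -/
def HasLinearResolution (I : Ideal (MvPolynomial (Fin n) K)) (δ : ℕ) : Prop :=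
  ∃ (n0 n1 n2 : ℕ) (g : Fin n0 → MvPolynomial (Fin n) K)
    (A : Matrix (Fin n0) (Fin n1) (MvPolynomial (Fin n) K))
    (B : Matrix (Fin n1) (Fin n2) (MvPolynomial (Fin n) K)),
    IsMinFreeRes I (fun _ => δ) (fun _ => δ + 1) (fun _ => δ + 2) g A B

end Poly

section QSC
variable (K : Type*) [Field K]

/-- A quasi star configuration `Z_d = T_d + S_2(2,d)` in `P^2`:
`d` general lines `L i` (pairwise distinct, no three concurrent), the star
configuration of their pairwise intersection points `p i j`, together with
`d` further distinct points `q i ∈ L i`, disjoint from the star points and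
not all collinear. -/
structure QuasiStarConfig (d : ℕ) where
  L : Fin d → MvPolynomial (Fin 3) K
  L_hom : ∀ i, (L i).IsHomogeneous 1
  L_ne : ∀ i, L i ≠ 0
  lines_distinct : ∀ i j, i ≠ j → ¬ ∃ c : K, L i = c • L j
  no_three_concurrent : ∀ i j k : Fin d, i ≠ j → i ≠ k → j ≠ k →
    ∀ v : Fin 3 → K, v ≠ 0 →
      ¬ (eval v (L i) = 0 ∧ eval v (L j) = 0 ∧ eval v (L k) = 0)
  p : Fin d → Fin d → (Fin 3 → K)
  p_ne : ∀ i j, i ≠ j → p i j ≠ 0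
  p_mem : ∀ i j, i ≠ j → eval (p i j) (L i) = 0 ∧ eval (p i j) (L j) = 0
  q : Fin d → (Fin 3 → K)
  q_ne : ∀ i, q i ≠ 0
  q_mem : ∀ i, eval (q i) (L i) = 0
  q_distinct : ∀ i j, i ≠ j → ¬ ProjEq (q i) (q j)
  q_not_star : ∀ i j k, j ≠ k → ¬ ProjEq (q i) (p j k)
  q_not_collinear : ¬ ∃ M : MvPolynomial (Fin 3) K,
    M.IsHomogeneous 1 ∧ M ≠ 0 ∧ ∀ i, eval (q i) M = 0

end QSC

/-- The defining (radical, saturated) ideal of a quasi star configuration. -/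
noncomputable def QuasiStarConfig.ideal {K : Type*} [Field K] {d : ℕ}
    (Z : QuasiStarConfig K d) :
    Ideal (MvPolynomial (Fin 3) K) :=
  (⨅ (i : Fin d) (j : Fin d) (_ : i ≠ j), pointIdeal (Z.p i j)) ⊓
    ⨅ i : Fin d, pointIdeal (Z.q i)

section Aux
variable {K : Type*} [Field K]

local notation "R3" => MvPolynomial (Fin 3) K
local notation "Hs" => homogeneousSubmodule (Fin 3) K

lemma hc_mul (h g : R3) {a t : ℕ} (hg : g.IsHomogeneous a) (hat : a ≤ t) :
    homogeneousComponent t (h * g) = homogeneousComponent (t - a) h * g := by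
  conv_lhs => rw [← support_sum_monomial_coeff h]
  conv_rhs => rw [← support_sum_monomial_coeff h]
  rw [Finset.sum_mul, map_sum, map_sum, Finset.sum_mul]
  refine Finset.sum_congr rfl fun d _ => ?_
  have hmon : ((monomial d) (coeff d h)).IsHomogeneous d.degree :=
    isHomogeneous_monomial _ rfl
  have h1 : ((monomial d) (coeff d h) * g).IsHomogeneous (d.degree + a) := hmon.mul hg
  rw [homogeneousComponent_of_mem ((mem_homogeneousSubmodule _ _).2 h1),
    homogeneousComponent_of_mem ((mem_homogeneousSubmodule _ _).2 hmon)]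
  by_cases hd : t - a = d.degree
  · have ht : t = d.degree + a := by omega
    simp [hd, ht]
  · have ht : ¬ (t = d.degree + a) := by omega
    simp [hd, ht]

lemma degree_eq_sum_fin (d : Fin 3 →₀ ℕ) : d.degree = ∑ i : Fin 3, d i := by
  rw [Finsupp.degree]
  exact Finset.sum_subset (Finset.subset_univ _)
    (fun i _ h => Finsupp.notMem_support_iff.1 h)

lemma eval_smul_homog {f : R3} {m : ℕ} (hf : f.IsHomogeneous m) (c : K) (q : Fin 3 → K) :
    eval (c • q) f = c ^ m * eval q f := by
  rw [eval_eq', eval_eq', Finset.mul_sum]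
  refine Finset.sum_congr rfl fun d hd => ?_
  have hdeg : d.degree = m := by
    by_contra hne
    exact (mem_support_iff.1 hd) (hf.coeff_eq_zero hne)
  have h2 : ∏ i : Fin 3, (c • q) i ^ d i = c ^ m * ∏ i : Fin 3, q i ^ d i := by
    simp only [Pi.smul_apply, smul_eq_mul, mul_pow]
    rw [Finset.prod_mul_distrib, Finset.prod_pow_eq_pow_sum, ← degree_eq_sum_fin, hdeg]
  rw [h2]; ring

lemma mem_pointIdeal_iff {f : R3} {m : ℕ} (hf : f.IsHomogeneous m) (q : Fin 3 → K) :
    f ∈ pointIdeal q ↔ eval q f = 0 := by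
  rw [pointIdeal]
  simp only [Ideal.mem_iInf, RingHom.mem_ker]
  constructor
  · intro h
    have := h 1
    rwa [one_smul] at this
  · intro h c
    rw [eval_smul_homog hf, h, mul_zero]

end Aux
section Aux2
variable {K : Type*} [Field K]

local notation "R3" => MvPolynomial (Fin 3) K
local notation "Hs" => homogeneousSubmodule (Fin 3) K

lemma exists_sep {u v : Fin 3 → K} (hu : u ≠ 0) (hv : v ≠ 0) (hne : ¬ ProjEq u v) :
    ∃ L : R3, L.IsHomogeneous 1 ∧ eval v L = 0 ∧ eval u L ≠ 0 := by
  by_cases hminor : ∃ a b : Fin 3, u a * v b ≠ u b * v a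
  · obtain ⟨a, b, hab⟩ := hminor
    refine ⟨C (v b) * X a - C (v a) * X b, ?_, ?_, ?_⟩
    · exact ((isHomogeneous_C_mul_X (v b) a).sub (isHomogeneous_C_mul_X (v a) b))
    · simp only [map_sub, map_mul, eval_C, eval_X]
      ring
    · simp only [map_sub, map_mul, eval_C, eval_X]
      intro h
      apply hab
      have : v b * u a = v a * u b := by linear_combination h
      linear_combination this
  · exfalso
    push_neg at hminor
    obtain ⟨b, hb⟩ : ∃ b, v b ≠ 0 := by
      by_contra h; push_neg at h; exact hv (funext h)
    apply hne
    refine ⟨u b / v b, ?_, ?_⟩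
    · intro h
      apply hu
      funext a
      have := hminor a b
      have hub : u b = 0 := by
        by_contra h'
        exact h' (by field_simp at h; simpa using h)
      rw [hub, zero_mul] at this
      have := mul_eq_zero.1 this
      tauto
    · funext a
      have := hminor a b
      rw [Pi.smul_apply, smul_eq_mul, div_mul_eq_mul_div, eq_div_iff hb]
      linear_combination this
  
lemma exists_nonvanish {u : Fin 3 → K} (hu : u ≠ 0) :
    ∃ L : R3, L.IsHomogeneous 1 ∧ eval u L ≠ 0 := by
  obtain ⟨a, ha⟩ : ∃ a, u a ≠ 0 := by
    by_contra h; push_neg at h; exact hu (funext h)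
  exact ⟨X a, isHomogeneous_X K a, by simpa using ha⟩

lemma exists_vanish {u : Fin 3 → K} (hu : u ≠ 0) :
    ∃ L : R3, L.IsHomogeneous 1 ∧ L ≠ 0 ∧ eval u L = 0 := by
  obtain ⟨a, ha⟩ : ∃ a, u a ≠ 0 := by
    by_contra h; push_neg at h; exact hu (funext h)
  obtain ⟨b, hb⟩ : ∃ b : Fin 3, b ≠ a := by
    refine ⟨if a = 0 then 1 else 0, ?_⟩
    split <;> simp_all <;> omega
  refine ⟨C (u a) * X b - C (u b) * X a, 
    (isHomogeneous_C_mul_X (u a) b).sub (isHomogeneous_C_mul_X (u b) a), ?_, ?_⟩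
  · intro h
    have hne' : (Finsupp.single a 1 : Fin 3 →₀ ℕ) ≠ Finsupp.single b 1 :=
      fun h' => hb (Finsupp.single_left_injective one_ne_zero h').symm
    have hc : coeff (Finsupp.single b 1) (C (u a) * X b - C (u b) * X a) = u a := by
      simp [coeff_sub, coeff_C_mul, coeff_X', hne']
    rw [h] at hc
    simp at hc
    exact ha hc.symm
  · simp only [map_sub, map_mul, eval_C, eval_X]
    ring

end Aux2
section Aux3

/-- index type for the monomial basis of the degree-`m` piece -/
def DegIdx (m : ℕ) : Type := {d : Fin 3 →₀ ℕ // d.degree = m}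

lemma finsupp_sum_id_eq_degree (d : Fin 3 →₀ ℕ) : (d.sum fun _ => id) = d.degree := rfl

/-- `Sym (Fin 3) m` is equivalent to `DegIdx m`. -/
noncomputable def degIdxEquiv (m : ℕ) : Sym (Fin 3) m ≃ DegIdx m :=
  (Sym.equivNatSum (Fin 3) m).trans
    (Equiv.subtypeEquivRight (fun d => by rw [finsupp_sum_id_eq_degree]))

noncomputable instance (m : ℕ) : Fintype (DegIdx m) :=
  Fintype.ofEquiv (Sym (Fin 3) m) (degIdxEquiv m)

lemma card_degIdx (m : ℕ) : 2 * Fintype.card (DegIdx m) = (m + 1) * (m + 2) := by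
  have h1 : Fintype.card (DegIdx m) = Fintype.card (Sym (Fin 3) m) :=
    (Fintype.card_congr (degIdxEquiv m)).symm
  rw [h1, Sym.card_sym_eq_multichoose, Fintype.card_fin, Nat.multichoose_eq]
  have h2 : (3 + m - 1).choose m = (m + 2).choose 2 := by
    have h := Nat.choose_symm (by omega : 2 ≤ m + 2)
    rw [show m + 2 - 2 = m from by omega] at h
    rw [show 3 + m - 1 = m + 2 from by omega]
    exact h
  rw [h2, Nat.choose_two_right]
  have h4 : m + 2 - 1 = m + 1 := by omega
  rw [h4]
  have h5 : 2 ∣ (m + 2) * (m + 1) := by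
    rcases Nat.even_mul_succ_self (m + 1) with ⟨r, hr⟩
    refine ⟨r, ?_⟩
    rw [show (m + 2) * (m + 1) = (m + 1) * (m + 1 + 1) from by ring, hr]
    ring
  rw [Nat.mul_div_cancel' h5]
  ring

variable {K : Type*} [Field K]

local notation "R3" => MvPolynomial (Fin 3) K
local notation "Hs" => homogeneousSubmodule (Fin 3) K

noncomputable def hsFam (m : ℕ) : DegIdx m → Hs m := fun d =>
  ⟨monomial d.1 1, (mem_homogeneousSubmodule _ _).2 (isHomogeneous_monomial _ d.2)⟩

lemma hsFam_li (m : ℕ) : LinearIndependent K (hsFam (K := K) m) := by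
  apply LinearIndependent.of_comp (Hs m).subtype
  have h : ((Hs m).subtype ∘ hsFam (K := K) m) =
      (fun d : DegIdx m => (monomial d.1) (1 : K)) := rfl
  rw [h]
  have hb := (basisMonomials (Fin 3) K).linearIndependent
  rw [coe_basisMonomials] at hb
  exact hb.comp Subtype.val Subtype.val_injective

lemma hsFam_span (m : ℕ) : ⊤ ≤ Submodule.span K (Set.range (hsFam (K := K) m)) := by
  rintro ⟨f, hf⟩ -
  have hdeg : ∀ d ∈ f.support, d.degree = m := by
    intro d hd
    by_contra hne
    exact (mem_support_iff.1 hd) (((mem_homogeneousSubmodule _ _).1 hf).coeff_eq_zero hne)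
  have key : (⟨f, hf⟩ : Hs m) =
      ∑ d ∈ f.support.attach, coeff d.1 f • hsFam m ⟨d.1, hdeg d.1 d.2⟩ := by
    apply Subtype.ext
    push_cast
    simp only [hsFam, SetLike.mk_smul_mk, smul_monomial, smul_eq_mul, mul_one]
    rw [Finset.sum_attach f.support (fun d => (monomial d) (coeff d f))]
    exact (support_sum_monomial_coeff f).symm
  rw [key]
  exact Submodule.sum_mem _ fun d _ =>
    Submodule.smul_mem _ _ (Submodule.subset_span ⟨_, rfl⟩)

noncomputable def hsBasis (m : ℕ) : Module.Basis (DegIdx m) K (Hs m) :=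
  Module.Basis.mk (hsFam_li m) (hsFam_span m)

set_option synthInstance.maxHeartbeats 400000 in
instance hsFinDim (m : ℕ) : FiniteDimensional K (Hs m) :=
  by
  have b := hsBasis (K := K) m
  exact Module.Finite.of_basis b

lemma two_finrank_hs (m : ℕ) :
    2 * Module.finrank K (Hs m) = (m + 1) * (m + 2) := by
  rw [Module.finrank_eq_card_basis (hsBasis (K := K) m)]
  exact card_degIdx m

end Aux3
section Aux4
variable {K : Type*} [Field K]

local notation "R3" => MvPolynomial (Fin 3) K
local notation "Hs" => homogeneousSubmodule (Fin 3) K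

/-- inclusion of a pi-type of graded pieces into the free module -/
noncomputable def incl (N s : ℕ) : (Fin N → Hs s) →ₗ[K] (Fin N → R3) :=
  LinearMap.pi (fun i => (Hs s).subtype.comp (LinearMap.proj i))

@[simp] lemma incl_apply {N s : ℕ} (v : Fin N → Hs s) (i : Fin N) :
    incl N s v i = (v i : R3) := rfl

lemma incl_injective {N s : ℕ} : Function.Injective (incl (K := K) N s) := by
  intro v w h
  funext i
  exact Subtype.ext (congrFun h i)

/-- the evaluation linear map at a family of points -/
noncomputable def evalMap {n : ℕ} (p : Fin n → (Fin 3 → K)) : R3 →ₗ[K] (Fin n → K) where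
  toFun f := fun i => eval (p i) f
  map_add' f g := by funext i; simp
  map_smul' c f := by funext i; simp [smul_eval]

@[simp] lemma evalMap_apply {n : ℕ} (p : Fin n → (Fin 3 → K)) (f : R3) (i : Fin n) :
    evalMap p f i = eval (p i) f := rfl

/-- linear combination with fixed coefficients, as a `K`-linear map -/
noncomputable def combMul {N : ℕ} (g : Fin N → R3) : (Fin N → R3) →ₗ[K] R3 :=
  (Fintype.linearCombination R3 g).restrictScalars K

lemma combMul_apply {N : ℕ} (g : Fin N → R3) (v : Fin N → R3) :
    combMul g v = ∑ i, v i * g i := by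
  simp [combMul, Fintype.linearCombination_apply, smul_eq_mul]

/-- matrix multiplication as a `K`-linear map -/
noncomputable def matMul {N0 N1 : ℕ} (A : Matrix (Fin N0) (Fin N1) R3) :
    (Fin N1 → R3) →ₗ[K] (Fin N0 → R3) :=
  (Matrix.toLin' A).restrictScalars K

lemma matMul_apply {N0 N1 : ℕ} (A : Matrix (Fin N0) (Fin N1) R3) (v : Fin N1 → R3) (i : Fin N0) :
    matMul A v i = ∑ j, A i j * v j := by
  simp [matMul, Matrix.toLin'_apply, Matrix.mulVec, dotProduct]

/-- the graded piece of the map given by a matrix of linear forms -/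
noncomputable def matGr {N0 N1 : ℕ} (A : Matrix (Fin N0) (Fin N1) R3)
    (hA : ∀ i j, (A i j).IsHomogeneous 1) (s : ℕ) :
    (Fin N1 → Hs s) →ₗ[K] (Fin N0 → Hs (s + 1)) :=
  LinearMap.pi fun i =>
    ((LinearMap.proj i).comp ((matMul A).comp (incl N1 s))).codRestrict (Hs (s + 1)) (by
      intro v
      simp only [LinearMap.comp_apply, LinearMap.proj_apply, matMul_apply]
      refine Submodule.sum_mem _ fun j _ => ?_
      rw [mem_homogeneousSubmodule]
      have := (hA i j).mul ((mem_homogeneousSubmodule _ _).1 (v j).2)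
      rwa [add_comm] at this)

lemma incl_matGr {N0 N1 : ℕ} (A : Matrix (Fin N0) (Fin N1) R3)
    (hA : ∀ i j, (A i j).IsHomogeneous 1) (s : ℕ) (w : Fin N1 → Hs s) :
    incl N0 (s + 1) (matGr A hA s w) = matMul A (incl N1 s w) := rfl

lemma comb_range (I : Ideal R3) {N a : ℕ} (g : Fin N → R3)
    (hg : ∀ i, (g i).IsHomogeneous a) (hspan : Ideal.span (Set.range g) = I) (s : ℕ) :
    LinearMap.range ((combMul g).comp (incl N s)) =
      (Submodule.restrictScalars K I) ⊓ (Hs (s + a)) := by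
  apply le_antisymm
  · rintro x ⟨v, rfl⟩
    simp only [LinearMap.comp_apply, combMul_apply, incl_apply]
    refine Submodule.mem_inf.2 ⟨?_, ?_⟩
    · refine Submodule.sum_mem _ fun i _ => ?_
      have hgI : g i ∈ I := hspan ▸ Ideal.subset_span (Set.mem_range_self i)
      exact Ideal.mul_mem_left I _ hgI
    · refine Submodule.sum_mem _ fun i _ => ?_
      exact (mem_homogeneousSubmodule _ _).2
        (((mem_homogeneousSubmodule _ _).1 (v i).2).mul (hg i))
  · rintro x hx
    rw [Submodule.mem_inf] at hx
    obtain ⟨hxI, hxH⟩ := hx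
    obtain ⟨c, hc⟩ := Ideal.mem_span_range_iff_exists_fun.1 (by rw [hspan]; exact hxI)
    refine ⟨fun i => ⟨homogeneousComponent s (c i), homogeneousComponent_mem _ _⟩, ?_⟩
    simp only [LinearMap.comp_apply, combMul_apply, incl_apply]
    have key : ∀ i, homogeneousComponent s (c i) * g i =
        homogeneousComponent (s + a) (c i * g i) := by
      intro i
      rw [hc_mul (c i) (g i) (hg i) (by omega), show s + a - a = s from by omega]
    calc ∑ i, (homogeneousComponent s (c i)) * g i
        = ∑ i, homogeneousComponent (s + a) (c i * g i) := by
          exact Finset.sum_congr rfl fun i _ => key i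
      _ = homogeneousComponent (s + a) (∑ i, c i * g i) := by rw [map_sum]
      _ = x := by rw [hc, homogeneousComponent_of_mem hxH, if_pos rfl]

lemma comb_ker {N0 N1 : ℕ} (g : Fin N0 → R3) (A : Matrix (Fin N0) (Fin N1) R3)
    (hA : ∀ i j, (A i j).IsHomogeneous 1)
    (hrange : LinearMap.range (Matrix.toLin' A) =
      LinearMap.ker (Fintype.linearCombination R3 g)) (s : ℕ) :
    LinearMap.ker ((combMul g).comp (incl N0 (s + 1))) = LinearMap.range (matGr A hA s) := by
  apply le_antisymm
  · intro v hv
    have hv' : incl N0 (s + 1) v ∈ LinearMap.ker (Fintype.linearCombination R3 g) := by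
      rw [LinearMap.mem_ker]
      have : combMul (K := K) g (incl N0 (s+1) v) = 0 := hv
      simpa [combMul] using this
    rw [← hrange] at hv'
    obtain ⟨w, hw⟩ := hv'
    refine ⟨fun j => ⟨homogeneousComponent s (w j), homogeneousComponent_mem _ _⟩, ?_⟩
    apply incl_injective
    rw [incl_matGr]
    funext i
    have hcomp : ∀ j, A i j * homogeneousComponent s (w j) =
        homogeneousComponent (s + 1) (A i j * w j) := by
      intro j
      rw [mul_comm (A i j) (w j), hc_mul (w j) (A i j) (hA i j) (by omega),
        show s + 1 - 1 = s from by omega]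
      exact mul_comm _ _
    have hAw : ∀ i', (Matrix.toLin' A w) i' = ∑ j, A i' j * w j := by
      intro i'
      simp [Matrix.toLin'_apply, Matrix.mulVec, dotProduct]
    calc matMul A (incl N1 s fun j => ⟨homogeneousComponent s (w j), _⟩) i
        = ∑ j, A i j * homogeneousComponent s (w j) := by rw [matMul_apply]; rfl
      _ = ∑ j, homogeneousComponent (s + 1) (A i j * w j) :=
          Finset.sum_congr rfl fun j _ => hcomp j
      _ = homogeneousComponent (s + 1) (∑ j, A i j * w j) := by rw [map_sum]
      _ = homogeneousComponent (s + 1) ((Matrix.toLin' A w) i) := by rw [hAw i]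
      _ = incl N0 (s + 1) v i := by
          rw [hw]
          exact homogeneousComponent_of_mem (v i).2 |>.trans (if_pos rfl)
  · rintro x ⟨w, rfl⟩
    rw [LinearMap.mem_ker, LinearMap.comp_apply, incl_matGr]
    have hmem : matMul (K := K) A (incl N1 s w) ∈
        LinearMap.ker (Fintype.linearCombination R3 g) := by
      rw [← hrange]
      exact ⟨incl N1 s w, rfl⟩
    have : Fintype.linearCombination R3 g (matMul A (incl N1 s w)) = 0 := hmem
    simpa [combMul] using this

lemma mat_ker {N0 N1 N2 : ℕ} (A : Matrix (Fin N0) (Fin N1) R3)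
    (hA : ∀ i j, (A i j).IsHomogeneous 1) (B : Matrix (Fin N1) (Fin N2) R3)
    (hB : ∀ j k, (B j k).IsHomogeneous 1)
    (hrange : LinearMap.range (Matrix.toLin' B) = LinearMap.ker (Matrix.toLin' A)) (s : ℕ) :
    LinearMap.ker (matGr A hA (s + 1)) = LinearMap.range (matGr B hB s) := by
  apply le_antisymm
  · intro v hv
    have hv0 : incl N0 (s + 2) (matGr A hA (s + 1) v) = 0 := by
      rw [LinearMap.mem_ker] at hv
      rw [hv]
      funext i
      rfl
    have hv' : incl N1 (s + 1) v ∈ LinearMap.ker (Matrix.toLin' A) := by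
      rw [LinearMap.mem_ker]
      have := hv0
      rw [incl_matGr] at this
      simpa [matMul] using this
    rw [← hrange] at hv'
    obtain ⟨w, hw⟩ := hv'
    refine ⟨fun k => ⟨homogeneousComponent s (w k), homogeneousComponent_mem _ _⟩, ?_⟩
    apply incl_injective
    rw [incl_matGr]
    funext j
    have hcomp : ∀ k, B j k * homogeneousComponent s (w k) =
        homogeneousComponent (s + 1) (B j k * w k) := by
      intro k
      rw [mul_comm (B j k) (w k), hc_mul (w k) (B j k) (hB j k) (by omega),
        show s + 1 - 1 = s from by omega]
      exact mul_comm _ _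
    have hBw : ∀ j', (Matrix.toLin' B w) j' = ∑ k, B j' k * w k := by
      intro j'
      simp [Matrix.toLin'_apply, Matrix.mulVec, dotProduct]
    calc matMul B (incl N2 s fun k => ⟨homogeneousComponent s (w k), _⟩) j
        = ∑ k, B j k * homogeneousComponent s (w k) := by rw [matMul_apply]; rfl
      _ = ∑ k, homogeneousComponent (s + 1) (B j k * w k) :=
          Finset.sum_congr rfl fun k _ => hcomp k
      _ = homogeneousComponent (s + 1) (∑ k, B j k * w k) := by rw [map_sum]
      _ = homogeneousComponent (s + 1) ((Matrix.toLin' B w) j) := by rw [hBw j]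
      _ = incl N1 (s + 1) v j := by
          rw [hw]
          exact homogeneousComponent_of_mem (v j).2 |>.trans (if_pos rfl)
  · rintro x ⟨w, rfl⟩
    rw [LinearMap.mem_ker]
    apply incl_injective
    rw [incl_matGr]
    have hmem : matMul (K := K) B (incl N2 s w) ∈ LinearMap.ker (Matrix.toLin' A) := by
      rw [← hrange]
      exact ⟨incl N2 s w, rfl⟩
    have h0 : Matrix.toLin' A (matMul B (incl N2 s w)) = 0 := hmem
    rw [incl_matGr]
    have : matMul (K := K) A (matMul B (incl N2 s w)) = 0 := by
      simpa [matMul] using h0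
    rw [this]
    funext i
    rfl

lemma matGr_ker_bot {N1 N2 : ℕ} (B : Matrix (Fin N1) (Fin N2) R3)
    (hB : ∀ j k, (B j k).IsHomogeneous 1) (hinj : Function.Injective (Matrix.toLin' B)) (s : ℕ) :
    LinearMap.ker (matGr B hB s) = ⊥ := by
  rw [LinearMap.ker_eq_bot]
  intro v w h
  apply incl_injective
  have h' : incl N1 (s+1) (matGr B hB s v) = incl N1 (s+1) (matGr B hB s w) := by rw [h]
  rw [incl_matGr, incl_matGr] at h'
  have := hinj (by simpa [matMul] using h' :
    Matrix.toLin' B (incl N2 s v) = Matrix.toLin' B (incl N2 s w))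
  exact this

end Aux4
section Aux5
variable {K : Type*} [Field K]

local notation "R3" => MvPolynomial (Fin 3) K
local notation "Hs" => homogeneousSubmodule (Fin 3) K

lemma finrank_pi_hs (N s : ℕ) :
    Module.finrank K (Fin N → Hs s) = N * Module.finrank K (Hs s) := by
  rw [Module.finrank_pi_fintype]
  simp [Finset.sum_const, Finset.card_univ, mul_comm]

/-- The key dimension identity coming from the graded free resolution. -/
lemma res_dim (I : Ideal R3) {N0 N1 N2 a : ℕ} (g : Fin N0 → R3)
    (hg : ∀ i, (g i).IsHomogeneous a) (hspan : Ideal.span (Set.range g) = I)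
    (A : Matrix (Fin N0) (Fin N1) R3) (hA : ∀ i j, (A i j).IsHomogeneous 1)
    (B : Matrix (Fin N1) (Fin N2) R3) (hB : ∀ j k, (B j k).IsHomogeneous 1)
    (hrangeA : LinearMap.range (Matrix.toLin' A) =
      LinearMap.ker (Fintype.linearCombination R3 g))
    (hrangeB : LinearMap.range (Matrix.toLin' B) = LinearMap.ker (Matrix.toLin' A))
    (hinj : Function.Injective (Matrix.toLin' B)) (s : ℕ) :
    Module.finrank K ((Submodule.restrictScalars K I) ⊓ (Hs (s + 2 + a)) : Submodule K R3)
        + N1 * Module.finrank K (Hs (s + 1))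
      = N0 * Module.finrank K (Hs (s + 2)) + N2 * Module.finrank K (Hs s) := by
  have e1 := LinearMap.finrank_range_add_finrank_ker ((combMul g).comp (incl N0 (s + 2)))
  rw [comb_range I g hg hspan (s + 2), comb_ker g A hA hrangeA (s + 1),
    finrank_pi_hs N0 (s + 2)] at e1
  have e2 := LinearMap.finrank_range_add_finrank_ker (matGr A hA (s + 1))
  rw [mat_ker A hA B hB hrangeB s, finrank_pi_hs N1 (s + 1)] at e2
  have e3 := LinearMap.finrank_range_add_finrank_ker (matGr B hB s)
  rw [matGr_ker_bot B hB hinj s, finrank_bot, finrank_pi_hs N2 s] at e3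
  linarith [e1, e2, e3]

end Aux5
set_option synthInstance.maxHeartbeats 1000000
set_option maxHeartbeats 1000000

section Aux6
variable {K : Type*} [Field K]

local notation "R3" => MvPolynomial (Fin 3) K
local notation "Hs" => homogeneousSubmodule (Fin 3) K

lemma eval_rank {n : ℕ} (p : Fin n → (Fin 3 → K)) (I : Ideal R3)
    (hI : I = ⨅ i, pointIdeal (p i)) (t : ℕ) :
    Module.finrank K ((Submodule.restrictScalars K I) ⊓ (Hs t) : Submodule K R3)
        + Module.finrank K ↥(LinearMap.range ((evalMap p).domRestrict (Hs t)))
      = Module.finrank K (Hs t) := by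
  have hker : LinearMap.ker ((evalMap p).domRestrict (Hs t)) =
      Submodule.comap (Hs t).subtype ((Submodule.restrictScalars K I) ⊓ (Hs t)) := by
    ext ⟨f, hf⟩
    simp only [LinearMap.mem_ker, LinearMap.domRestrict_apply, Submodule.mem_comap,
      Submodule.subtype_apply, Submodule.mem_inf, Submodule.restrictScalars_mem]
    have hfh : f.IsHomogeneous t := (mem_homogeneousSubmodule _ _).1 hf
    constructor
    · intro h
      refine ⟨?_, hf⟩
      rw [hI, Ideal.mem_iInf]
      intro i
      rw [mem_pointIdeal_iff hfh]
      exact congrFun h i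
    · rintro ⟨hfI, -⟩
      funext i
      rw [hI, Ideal.mem_iInf] at hfI
      have := (mem_pointIdeal_iff hfh (p i)).1 (hfI i)
      simpa using this
  have hrn := LinearMap.finrank_range_add_finrank_ker ((evalMap p).domRestrict (Hs t))
  rw [hker] at hrn
  have heq : Module.finrank K
        ↥(Submodule.comap (Hs t).subtype ((Submodule.restrictScalars K I) ⊓ (Hs t)))
      = Module.finrank K ↥((Submodule.restrictScalars K I) ⊓ (Hs t)) :=
    LinearEquiv.finrank_eq (Submodule.comapSubtypeEquivOfLe inf_le_right)
  rw [heq] at hrn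
  linarith [hrn]

lemma eval_surj {n t : ℕ} (p : Fin n → (Fin 3 → K)) (F : Fin n → R3)
    (hFmem : ∀ i, F i ∈ Hs t) (hFi : ∀ i, eval (p i) (F i) ≠ 0)
    (hF0 : ∀ i j, j ≠ i → eval (p j) (F i) = 0) :
    LinearMap.range ((evalMap p).domRestrict (Hs t)) = ⊤ := by
  rw [LinearMap.range_eq_top]
  intro u
  refine ⟨∑ i, (u i * (eval (p i) (F i))⁻¹) • (⟨F i, hFmem i⟩ : Hs t), ?_⟩
  funext j
  have hval : ((∑ i, (u i * (eval (p i) (F i))⁻¹) • (⟨F i, hFmem i⟩ : Hs t) : Hs t) : R3)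
      = ∑ i, (u i * (eval (p i) (F i))⁻¹) • F i := by
    push_cast
    rfl
  rw [LinearMap.domRestrict_apply, hval]
  rw [map_sum (evalMap p) _ Finset.univ]
  have : ∀ i, evalMap p ((u i * (eval (p i) (F i))⁻¹) • F i) j
      = (u i * (eval (p i) (F i))⁻¹) * eval (p j) (F i) := by
    intro i
    simp [smul_eval]
  calc (∑ i, evalMap p ((u i * (eval (p i) (F i))⁻¹) • F i)) j
      = ∑ i, (u i * (eval (p i) (F i))⁻¹) * eval (p j) (F i) := by
        rw [Finset.sum_apply]
        exact Finset.sum_congr rfl fun i _ => this i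
    _ = u j := by
        rw [Finset.sum_eq_single j]
        · rw [mul_assoc, inv_mul_cancel₀ (hFi j), mul_one]
        · intro i _ hij
          rw [hF0 i j (Ne.symm hij), mul_zero]
        · intro h
          exact absurd (Finset.mem_univ j) h

lemma exists_interp {n : ℕ} (p : Fin n → (Fin 3 → K)) (hp : ∀ i, p i ≠ 0)
    (hdist : ∀ i j, i ≠ j → ¬ ProjEq (p i) (p j)) {t : ℕ} (ht : n ≤ t + 1) (i : Fin n) :
    ∃ F : R3, F.IsHomogeneous t ∧ eval (p i) F ≠ 0 ∧ ∀ j, j ≠ i → eval (p j) F = 0 := by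
  have hL : ∀ j, ∃ L : R3, L.IsHomogeneous 1 ∧ (j ≠ i → eval (p j) L = 0) ∧
      eval (p i) L ≠ 0 := by
    intro j
    by_cases h : j = i
    · obtain ⟨L, h1, h2⟩ := exists_nonvanish (hp i)
      exact ⟨L, h1, fun hc => absurd h hc, h2⟩
    · obtain ⟨L, h1, h2, h3⟩ := exists_sep (hp i) (hp j) (hdist i j (Ne.symm h))
      exact ⟨L, h1, fun _ => h2, h3⟩
  choose L hLh hL0 hLi using hL
  obtain ⟨l0, hl0h, hl0⟩ := exists_nonvanish (hp i)
  refine ⟨l0 ^ (t - (n - 1)) * ∏ j ∈ Finset.univ.erase i, L j, ?_, ?_, ?_⟩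
  · have h1 : (l0 ^ (t - (n - 1))).IsHomogeneous (1 * (t - (n - 1))) := hl0h.pow _
    have h2 : (∏ j ∈ Finset.univ.erase i, L j).IsHomogeneous
        (∑ j ∈ Finset.univ.erase i, 1) :=
      IsHomogeneous.prod _ _ _ fun j _ => hLh j
    have hcard : (∑ j ∈ Finset.univ.erase i, 1) = n - 1 := by
      rw [Finset.sum_const, smul_eq_mul, mul_one, Finset.card_erase_of_mem (Finset.mem_univ i),
        Finset.card_univ, Fintype.card_fin]
    rw [hcard] at h2
    have := h1.mul h2
    rwa [show 1 * (t - (n - 1)) + (n - 1) = t from by omega] at this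
  · rw [map_mul, map_pow, map_prod]
    refine mul_ne_zero (pow_ne_zero _ hl0) ?_
    rw [Finset.prod_ne_zero_iff]
    exact fun j _ => hLi j
  · intro j hj
    rw [map_mul, map_prod]
    rw [Finset.prod_eq_zero (Finset.mem_erase.2 ⟨hj, Finset.mem_univ j⟩) (hL0 j hj)]
    exact mul_zero _

lemma constantCoeff_eq_zero_of_homog {f : R3} {d : ℕ} (hf : f.IsHomogeneous d) (hd : d ≠ 0) :
    constantCoeff f = 0 := by
  have : coeff 0 f = 0 := hf.coeff_eq_zero (by simpa [map_zero] using hd.symm)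
  simpa [constantCoeff_eq] using this

end Aux6
/-- if `reg(I^m) = m·α(I)` for all `m ≥ 1`, where `I` is the radical ideal
of a finite set of reduced points in `P^2`, then `I` is minimally generated by
`α(I)+1` forms of degree `α(I)`. -/
theorem min_gen_of_reg_pow {K : Type*} [Field K] [IsAlgClosed K]
    (n : ℕ) (hn : 0 < n) (p : Fin n → (Fin 3 → K)) (hp : ∀ i, p i ≠ 0)
    (hdist : ∀ i j, i ≠ j → ¬ ProjEq (p i) (p j))
    (I : Ideal (MvPolynomial (Fin 3) K)) (hI : I = ⨅ i, pointIdeal (p i))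
    (hreg : ∀ m : ℕ, 1 ≤ m → HasReg (I ^ m) (m * initDeg I)) :
    MinimallyGeneratedBy I (initDeg I + 1) (initDeg I) := by
  classical
  set α := initDeg I with hαdef
  -- a nonzero homogeneous element of I of degree n
  have hM : ∀ i : Fin n, ∃ L : MvPolynomial (Fin 3) K,
      L.IsHomogeneous 1 ∧ L ≠ 0 ∧ eval (p i) L = 0 := fun i => exists_vanish (hp i)
  choose M hM1 hM2 hM3 using hM
  have hGhom : (∏ i, M i).IsHomogeneous n := by
    have := MvPolynomial.IsHomogeneous.prod Finset.univ M (fun _ => 1) (fun i _ => hM1 i)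
    rwa [Finset.sum_const, smul_eq_mul, mul_one, Finset.card_univ, Fintype.card_fin] at this
  have hGne : (∏ i, M i) ≠ 0 := by
    intro h0
    obtain ⟨i, -, hi⟩ := (Finset.prod_eq_zero_iff (M₀ := MvPolynomial (Fin 3) K)).mp h0
    exact hM2 i hi
  have hGI : (∏ i, M i) ∈ I := by
    rw [hI, Ideal.mem_iInf]
    intro i
    rw [mem_pointIdeal_iff hGhom, map_prod]
    exact Finset.prod_eq_zero (Finset.mem_univ i) (hM3 i)
  -- basic properties of α
  have hSne : {t | ∃ f ∈ I, f ≠ 0 ∧ MvPolynomial.totalDegree f = t}.Nonempty :=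
    ⟨(∏ i, M i).totalDegree, ∏ i, M i, hGI, hGne, rfl⟩
  have hαmem : ∃ f ∈ I, f ≠ 0 ∧ MvPolynomial.totalDegree f = α := Nat.sInf_mem hSne
  have hαle : ∀ f ∈ I, f ≠ 0 → α ≤ f.totalDegree := fun f hf hne =>
    Nat.sInf_le ⟨f, hf, hne, rfl⟩
  have hα1 : 1 ≤ α := by
    by_contra hc
    push_neg at hc
    obtain ⟨f, hfI, hfne, hfdeg⟩ := hαmem
    have hfdeg0 : f.totalDegree = 0 := by omega
    have hf0 : f.IsHomogeneous 0 := (totalDegree_zero_iff_isHomogeneous (Fin 3)).1 hfdeg0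
    have i0 : Fin n := ⟨0, hn⟩
    have hfp : eval (p i0) f = 0 := by
      have : f ∈ pointIdeal (p i0) := by
        rw [hI] at hfI
        exact Ideal.mem_iInf.1 hfI i0
      exact (mem_pointIdeal_iff hf0 (p i0)).1 this
    have hfC : f = C (coeff 0 f) := by
      ext d
      rw [coeff_C]
      by_cases hd : d = 0
      · subst hd; simp
      · rw [if_neg (fun h => hd h.symm)]
        exact hf0.coeff_eq_zero (fun hdeg => hd ((Finsupp.degree_eq_zero_iff d).1 hdeg))
    rw [hfC] at hfp
    rw [eval_C] at hfp
    exact hfne (by rw [hfC, hfp, map_zero])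
  -- the minimal free resolution of I
  have hres1 := hreg 1 le_rfl
  rw [pow_one, one_mul] at hres1
  obtain ⟨N0, N1, N2, e0, e1, e2, g, A, B, hres, hrmax⟩ := hres1
  obtain ⟨hg, hspan, hA, hB, hBinj, hBA, hAg⟩ := hres
  -- pin down the shifts
  have hsup0 : Finset.univ.sup e0 ≤ α := hrmax ▸ le_max_left _ _
  have hsup1 : (Finset.univ.sup fun j => e1 j - 1) ≤ α :=
    hrmax ▸ le_trans (le_max_left _ _) (le_max_right _ _)
  have hsup2 : (Finset.univ.sup fun k => e2 k - 2) ≤ α :=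
    hrmax ▸ le_trans (le_max_right _ _) (le_max_right _ _)
  have he0 : ∀ i, e0 i = α := by
    intro i
    have h1 : e0 i ≤ α := le_trans (Finset.le_sup (Finset.mem_univ i)) hsup0
    have hgI : g i ∈ I := hspan ▸ Ideal.subset_span ⟨i, rfl⟩
    have h2 : α ≤ e0 i := by
      have := hαle (g i) hgI (hg i).2
      rwa [(hg i).1.totalDegree (hg i).2] at this
    omega
  have hBcc : ∀ j k, constantCoeff (B j k) = 0 := by
    intro j k
    by_cases h0 : B j k = 0
    · simp [h0]
    · have hlt : e1 j < e2 k := lt_of_not_ge (fun hle => h0 ((hB j k).2 hle))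
      exact constantCoeff_eq_zero_of_homog (hB j k).1 (by omega)
  have hAcc : ∀ i j, constantCoeff (A i j) = 0 := by
    intro i j
    by_cases h0 : A i j = 0
    · simp [h0]
    · have hlt : e0 i < e1 j := lt_of_not_ge (fun hle => h0 ((hA i j).2 hle))
      exact constantCoeff_eq_zero_of_homog (hA i j).1 (by omega)
  have hcolA : ∀ j, ∃ i, A i j ≠ 0 := by
    intro j
    by_contra hno
    push_neg at hno
    have h0 : Matrix.toLin' A (Pi.single j 1) = 0 := by
      rw [Matrix.toLin'_apply, Matrix.mulVec_single]
      funext i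
      simp [hno i]
    have hker : Pi.single j (1 : MvPolynomial (Fin 3) K) ∈
        LinearMap.ker (Matrix.toLin' A) := h0
    rw [← hBA] at hker
    obtain ⟨w, hw⟩ := hker
    have h1 : (∑ k, B j k * w k) = 1 := by
      have h2 := congrFun hw j
      rw [Matrix.toLin'_apply] at h2
      simpa [Matrix.mulVec, dotProduct, Pi.single_eq_same] using h2
    have h2 := congrArg constantCoeff h1
    rw [map_sum, map_one] at h2
    simp only [map_mul] at h2
    simp [hBcc] at h2
  have hcolB : ∀ k, ∃ j, B j k ≠ 0 := by
    intro k
    by_contra hno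
    push_neg at hno
    have h0 : Matrix.toLin' B (Pi.single k 1 : Fin N2 → MvPolynomial (Fin 3) K) = 0 := by
      rw [Matrix.toLin'_apply, Matrix.mulVec_single]
      funext j
      simp [hno j]
    have h1 : (Pi.single k 1 : Fin N2 → MvPolynomial (Fin 3) K) = 0 := by
      apply hBinj
      rw [h0, map_zero]
    have := congrFun h1 k
    rw [Pi.single_eq_same] at this
    exact one_ne_zero this
  have he1 : ∀ j, e1 j = α + 1 := by
    intro j
    obtain ⟨i, hAij⟩ := hcolA j
    have hlt : e0 i < e1 j := lt_of_not_ge (fun hle => hAij ((hA i j).2 hle))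
    rw [he0 i] at hlt
    have hle : e1 j - 1 ≤ α := le_trans (Finset.le_sup (f := fun j => e1 j - 1) (Finset.mem_univ j)) hsup1
    omega
  have he2 : ∀ k, e2 k = α + 2 := by
    intro k
    obtain ⟨j, hBjk⟩ := hcolB k
    have hlt : e1 j < e2 k := lt_of_not_ge (fun hle => hBjk ((hB j k).2 hle))
    rw [he1 j] at hlt
    have hle : e2 k - 2 ≤ α := le_trans (Finset.le_sup (f := fun k => e2 k - 2) (Finset.mem_univ k)) hsup2
    omega
  have hghom : ∀ i, (g i).IsHomogeneous α := fun i => he0 i ▸ (hg i).1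
  have hA1 : ∀ i j, (A i j).IsHomogeneous 1 := by
    intro i j
    have := (hA i j).1
    rwa [he1 j, he0 i, show α + 1 - α = 1 from by omega] at this
  have hB1 : ∀ j k, (B j k).IsHomogeneous 1 := by
    intro j k
    have := (hB j k).1
    rwa [he2 k, he1 j, show α + 2 - (α + 1) = 1 from by omega] at this
  -- dimension identities
  have hres_dim : ∀ s : ℕ,
      Module.finrank K ((Submodule.restrictScalars K I) ⊓
          (homogeneousSubmodule (Fin 3) K (s + 2 + α)) : Submodule K (MvPolynomial (Fin 3) K))
        + N1 * Module.finrank K (homogeneousSubmodule (Fin 3) K (s + 1))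
      = N0 * Module.finrank K (homogeneousSubmodule (Fin 3) K (s + 2))
        + N2 * Module.finrank K (homogeneousSubmodule (Fin 3) K s) :=
    fun s => res_dim I g hghom hspan A hA1 B hB1 hAg hBA hBinj s
  have hJ : ∀ t : ℕ, n ≤ t + 1 →
      Module.finrank K ((Submodule.restrictScalars K I) ⊓
          (homogeneousSubmodule (Fin 3) K t) : Submodule K (MvPolynomial (Fin 3) K)) + n
        = Module.finrank K (homogeneousSubmodule (Fin 3) K t) := by
    intro t ht
    have h1 := eval_rank p I hI t
    have hF := fun i => exists_interp p hp hdist (t := t) ht i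
    choose F hF1 hF2 hF3 using hF
    have hs : LinearMap.range ((evalMap p).domRestrict (homogeneousSubmodule (Fin 3) K t)) = ⊤ :=
      eval_surj p F (fun i => (mem_homogeneousSubmodule _ _).2 (hF1 i)) hF2
        (fun i j hj => hF3 i j hj)
    rw [hs, finrank_top, Module.finrank_pi, Fintype.card_fin] at h1
    exact h1
  -- the lower bound 2n ≥ α(α+1)
  have hlow : α * (α + 1) ≤ 2 * n := by
    have h1 := eval_rank p I hI (α - 1)
    have hbot : ((Submodule.restrictScalars K I) ⊓
        (homogeneousSubmodule (Fin 3) K (α - 1)) : Submodule K (MvPolynomial (Fin 3) K)) = ⊥ := by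
      rw [eq_bot_iff]
      rintro f hf
      rw [Submodule.mem_inf] at hf
      obtain ⟨hfI, hfH⟩ := hf
      rw [Submodule.mem_bot]
      by_contra hne
      have h2 := hαle f hfI hne
      rw [((mem_homogeneousSubmodule _ _).1 hfH).totalDegree hne] at h2
      omega
    rw [hbot, finrank_bot] at h1
    have h2 : Module.finrank K
        ↥(LinearMap.range ((evalMap p).domRestrict (homogeneousSubmodule (Fin 3) K (α - 1))))
        ≤ n := by
      have h3 := Submodule.finrank_le
        (LinearMap.range ((evalMap p).domRestrict (homogeneousSubmodule (Fin 3) K (α - 1))))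
      rwa [Module.finrank_pi, Fintype.card_fin] at h3
    have h3 := two_finrank_hs (K := K) (α - 1)
    rw [show α - 1 + 1 = α from by omega, show α - 1 + 2 = α + 1 from by omega] at h3
    linarith
  -- putting the numbers together
  have hE : ∀ s : ℕ, n ≤ s →
      Module.finrank K (homogeneousSubmodule (Fin 3) K (s + 2 + α))
          + N1 * Module.finrank K (homogeneousSubmodule (Fin 3) K (s + 1))
        = n + N0 * Module.finrank K (homogeneousSubmodule (Fin 3) K (s + 2))
          + N2 * Module.finrank K (homogeneousSubmodule (Fin 3) K s) := by
    intro s hs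
    have h1 := hres_dim s
    have h2 := hJ (s + 2 + α) (by omega)
    linarith
  have hDq : ∀ m : ℕ, (2 : ℚ) * (Module.finrank K (homogeneousSubmodule (Fin 3) K m) : ℚ)
      = ((m : ℚ) + 1) * ((m : ℚ) + 2) := by
    intro m
    have h := two_finrank_hs (K := K) m
    have h' := congrArg (Nat.cast : ℕ → ℚ) h
    push_cast at h'
    linarith
  have hEq : ∀ s : ℕ, n ≤ s →
      ((s : ℚ) + α + 3) * ((s : ℚ) + α + 4)
          + (N1 : ℚ) * (((s : ℚ) + 2) * ((s : ℚ) + 3))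
        = 2 * (n : ℚ) + (N0 : ℚ) * (((s : ℚ) + 3) * ((s : ℚ) + 4))
          + (N2 : ℚ) * (((s : ℚ) + 1) * ((s : ℚ) + 2)) := by
    intro s hs
    have h := hE s hs
    have h' := congrArg (Nat.cast : ℕ → ℚ) h
    push_cast at h'
    have d1 := hDq (s + 2 + α)
    have d2 := hDq (s + 1)
    have d3 := hDq (s + 2)
    have d4 := hDq s
    push_cast at d1 d2 d3 d4
    linear_combination 2 * h' - d1 - (N1 : ℚ) * d2 + (N0 : ℚ) * d3 + (N2 : ℚ) * d4
  have F0 := hEq n le_rfl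
  have F1 := hEq (n + 1) (by omega)
  have F2 := hEq (n + 2) (by omega)
  push_cast at F1 F2
  have key1 : (N0 : ℚ) = (α : ℚ) + 1 + (N2 : ℚ) := by
    linear_combination (((n : ℚ) + 4) / 2) * F0 - ((2 * (n : ℚ) + 7) / 2) * F1
      + (((n : ℚ) + 3) / 2) * F2
  have key2 : 2 * (n : ℚ) = (α : ℚ) ^ 2 + (α : ℚ) - 2 * (N2 : ℚ) := by
    linear_combination (-1 - ((n : ℚ) + 3) * ((n : ℚ) + 5) + ((n : ℚ) + 3) * ((n : ℚ) + 4) / 2) * F0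
      + (((n : ℚ) + 3) * ((n : ℚ) + 5)) * F1
      - (((n : ℚ) + 3) * ((n : ℚ) + 4) / 2) * F2
  have hlowq : (α : ℚ) * ((α : ℚ) + 1) ≤ 2 * (n : ℚ) := by exact_mod_cast hlow
  have hN2 : N2 = 0 := by
    have h1 : (N2 : ℚ) ≤ 0 := by nlinarith [key2, hlowq]
    have h2 : (0 : ℚ) ≤ (N2 : ℚ) := by positivity
    have : (N2 : ℚ) = 0 := le_antisymm h1 h2
    exact_mod_cast this
  have hN0 : N0 = α + 1 := by
    have h1 : (N0 : ℚ) = (α : ℚ) + 1 := by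
      rw [key1, hN2]
      push_cast
      ring
    exact_mod_cast h1
  -- conclusion
  rw [show α + 1 = N0 from hN0.symm]
  refine ⟨g, fun i => ⟨hghom i, (hg i).2⟩, hspan, ?_⟩
  intro i hmem
  have himg : g '' {j | j ≠ i} = Set.range (fun j : {j : Fin N0 // j ≠ i} => g j.1) := by
    ext x
    constructor
    · rintro ⟨j, hj, rfl⟩
      exact ⟨⟨j, hj⟩, rfl⟩
    · rintro ⟨⟨j, hj⟩, rfl⟩
      exact ⟨j, hj, rfl⟩
  rw [himg] at hmem
  obtain ⟨c, hc⟩ := Ideal.mem_span_range_iff_exists_fun.1 hmem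
  set v : Fin N0 → MvPolynomial (Fin 3) K :=
    fun j => if h : j = i then -1 else c ⟨j, h⟩ with hvdef
  have hvi : v i = -1 := by simp [hvdef]
  have hvj : ∀ j (h : j ≠ i), v j = c ⟨j, h⟩ := fun j h => by simp [hvdef, h]
  have hvker : Fintype.linearCombination (MvPolynomial (Fin 3) K) g v
      = 0 := by
    rw [Fintype.linearCombination_apply]
    rw [← Finset.add_sum_erase Finset.univ (fun j => v j • g j) (Finset.mem_univ i)]
    have hsum : ∑ j ∈ Finset.univ.erase i, v j • g j
        = ∑ j : {j : Fin N0 // j ≠ i}, c j * g j.1 := by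
      rw [Finset.sum_subtype (p := fun j => j ≠ i) (Finset.univ.erase i)
        (fun j => by simp [Finset.mem_erase]) (fun j => v j • g j)]
      refine Finset.sum_congr rfl fun a _ => ?_
      rw [hvj a.1 a.2, smul_eq_mul]
    rw [hsum, hc, hvi]
    simp
  have hvmem : v ∈ LinearMap.ker
      (Fintype.linearCombination (MvPolynomial (Fin 3) K) g) := hvker
  rw [← hAg] at hvmem
  obtain ⟨w, hw⟩ := hvmem
  have hvexp : v i = ∑ j, A i j * w j := by
    have h2 := congrFun hw i
    rw [Matrix.toLin'_apply] at h2
    rw [← h2]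
    simp [Matrix.mulVec, dotProduct]
  have hcc : constantCoeff (v i) = 0 := by
    rw [hvexp, map_sum]
    simp only [map_mul]
    simp [hAcc]
  rw [hvi] at hcc
  simp at hcc
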